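/- Let K be a positive integer, let m_1, …, m_K be real numbers with Σ_{k=1}^K m_k² ≤ C for some constant C ≥ 0, and let s_1², …, s_K² ≥ 0 be nonnegative reals. Then Σ_{k=1}^K erf( m_k / √(1 + 2 s_k²) )² ≤ K · (1 − exp(−(4/π) C / K)). -/

import Mathlib

/-- The Gauss error function `erf(z) = ∫_0^z (2/√π) exp(-t²) dt`. -/
noncomputable def erf (z : ℝ) : ℝ :=
  ∫ t in (0 : ℝ)..z, 2 / Real.sqrt Real.pi * Real.exp (-t ^ 2)

open Real MeasureTheory intervalIntegral Set

lemma erf_eq (z : ℝ) :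
    erf z = 2 / Real.sqrt Real.pi * ∫ t in (0:ℝ)..z, Real.exp (-t ^ 2) := by
  rw [erf, intervalIntegral.integral_const_mul]

lemma erf_hasDerivAt (x : ℝ) :
    HasDerivAt erf (2 / Real.sqrt Real.pi * Real.exp (-x ^ 2)) x := by
  have hc : Continuous fun t : ℝ => 2 / Real.sqrt Real.pi * Real.exp (-t ^ 2) := by fun_prop
  exact intervalIntegral.integral_hasDerivAt_right
    (hc.intervalIntegrable _ _) (hc.stronglyMeasurableAtFilter _ _) hc.continuousAt

lemma subst_lemma (x : ℝ) :
    x * ∫ t in (0:ℝ)..1, Real.exp (-(x*t) ^ 2) = ∫ s in (0:ℝ)..x, Real.exp (-s ^ 2) := by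
  have := intervalIntegral.smul_integral_comp_mul_left (a := (0:ℝ)) (b := 1)
    (fun s => Real.exp (-s ^ 2)) x
  simpa [smul_eq_mul] using this

noncomputable def I (x : ℝ) : ℝ :=
  ∫ t in (0:ℝ)..1, Real.exp (-(x ^ 2 * (1 + t ^ 2))) / (1 + t ^ 2)

lemma inner_hasDerivAt (t x : ℝ) :
    HasDerivAt (fun y : ℝ => Real.exp (-(y ^ 2 * (1 + t ^ 2))) / (1 + t ^ 2))
      ((-2*x) * Real.exp (-(x ^ 2 * (1 + t ^ 2)))) x := by
  have ht : (0:ℝ) < 1 + t ^ 2 := by positivity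
  have h1 : HasDerivAt (fun y : ℝ => -(y ^ 2 * (1 + t ^ 2))) (-(2*x*(1 + t ^ 2))) x := by
    simpa using (((hasDerivAt_pow 2 x).mul_const (1 + t ^ 2)).fun_neg)
  have h2 := (h1.exp).div_const (1 + t ^ 2)
  refine h2.congr_deriv ?_
  field_simp

lemma cont_F (x : ℝ) : Continuous fun t : ℝ => Real.exp (-(x ^ 2 * (1 + t ^ 2))) / (1 + t ^ 2) := by
  apply Continuous.div (by fun_prop) (by fun_prop)
  intro t; positivity

lemma I_hasDerivAt (x : ℝ) :
    HasDerivAt I (∫ t in (0:ℝ)..1, (-2*x) * Real.exp (-(x ^ 2 * (1 + t ^ 2)))) x := by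
  have key := intervalIntegral.hasDerivAt_integral_of_dominated_loc_of_deriv_le
    (F := fun y t => Real.exp (-(y ^ 2 * (1 + t ^ 2))) / (1 + t ^ 2))
    (F' := fun y t => (-2*y) * Real.exp (-(y ^ 2 * (1 + t ^ 2))))
    (x₀ := x) (a := (0:ℝ)) (b := 1) (μ := volume)
    (bound := fun _ => 2 * (|x| + 1)) (s := Metric.ball x 1) (Metric.ball_mem_nhds x one_pos)
    ?_ ?_ ?_ ?_ ?_ ?_
  · exact key.2
  · filter_upwards with y using ((cont_F y).aestronglyMeasurable).restrict
  · exact (cont_F x).intervalIntegrable _ _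
  · exact (Continuous.aestronglyMeasurable (by fun_prop)).restrict
  · filter_upwards with t _ y hy
    have h1 : |(-2*y)| ≤ 2 * (|x| + 1) := by
      rw [Metric.mem_ball, Real.dist_eq] at hy
      rw [abs_mul]
      have : |y| ≤ |x| + 1 := by
        have := abs_sub_abs_le_abs_sub y x
        linarith
      calc |(-2:ℝ)| * |y| = 2 * |y| := by norm_num
        _ ≤ 2 * (|x| + 1) := by linarith
    have h2 : Real.exp (-(y ^ 2 * (1 + t ^ 2))) ≤ 1 := by
      apply Real.exp_le_one_iff.mpr
      have : (0:ℝ) ≤ y ^ 2 * (1 + t ^ 2) := by positivity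
      linarith
    calc ‖(-2*y) * Real.exp (-(y ^ 2 * (1 + t ^ 2)))‖
        = |(-2*y)| * Real.exp (-(y ^ 2 * (1 + t ^ 2))) := by
          rw [norm_mul, Real.norm_eq_abs, Real.norm_eq_abs,
            abs_of_pos (Real.exp_pos _)]
      _ ≤ (2 * (|x| + 1)) * 1 := by
          apply mul_le_mul h1 h2 (le_of_lt (Real.exp_pos _)) (by positivity)
      _ = 2 * (|x| + 1) := mul_one _
  · exact (continuous_const.intervalIntegrable _ _)
  · filter_upwards with t _ y _ using inner_hasDerivAt t y

lemma sqrt_pi_pos : (0:ℝ) < Real.sqrt Real.pi := Real.sqrt_pos.mpr Real.pi_pos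

lemma int_eq_erf (x : ℝ) :
    ∫ s in (0:ℝ)..x, Real.exp (-s ^ 2) = Real.sqrt Real.pi / 2 * erf x := by
  rw [erf_eq]
  field_simp

lemma I_deriv_value (x : ℝ) :
    ∫ t in (0:ℝ)..1, (-2*x) * Real.exp (-(x ^ 2 * (1 + t ^ 2)))
      = -Real.sqrt Real.pi * Real.exp (-x ^ 2) * erf x := by
  have h1 : ∀ t : ℝ, (-2*x) * Real.exp (-(x ^ 2 * (1 + t ^ 2)))
      = (-2 * Real.exp (-x ^ 2)) * (x * Real.exp (-(x*t) ^ 2)) := by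
    intro t
    rw [show (-(x ^ 2 * (1 + t ^ 2))) = (-x ^ 2) + (-(x*t) ^ 2) by ring, Real.exp_add]
    ring
  simp only [h1]
  rw [intervalIntegral.integral_const_mul, intervalIntegral.integral_const_mul,
    subst_lemma, int_eq_erf]
  have hπ : Real.sqrt Real.pi ^ 2 = Real.pi := Real.sq_sqrt Real.pi_pos.le
  ring

lemma G_hasDerivAt (x : ℝ) :
    HasDerivAt (fun y => erf y ^ 2 + 4 / Real.pi * I y) 0 x := by
  have h1 : HasDerivAt (fun y => erf y ^ 2)
      (2 * erf x * (2 / Real.sqrt Real.pi * Real.exp (-x ^ 2))) x := by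
    simpa [mul_comm] using ((erf_hasDerivAt x).fun_pow 2)
  have h2 := (I_hasDerivAt x).const_mul (4 / Real.pi)
  rw [I_deriv_value] at h2
  have := h1.fun_add h2
  refine this.congr_deriv ?_
  have hπ : Real.sqrt Real.pi ^ 2 = Real.pi := Real.sq_sqrt Real.pi_pos.le
  have hπ0 : Real.pi ≠ 0 := Real.pi_ne_zero
  have hs0 : Real.sqrt Real.pi ≠ 0 := sqrt_pi_pos.ne'
  rw [← hπ]
  field_simp
  linear_combination (-4 * Real.exp (-x^2) * erf x) * (Real.sq_sqrt (sq_nonneg (Real.sqrt Real.pi))).trans hπ + (4 * Real.exp (-x^2) * erf x) * hπ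

lemma erf_zero : erf 0 = 0 := by simp [erf]

lemma I_zero : I 0 = Real.pi / 4 := by
  have : I 0 = ∫ t in (0:ℝ)..1, 1 / (1 + t ^ 2) := by
    unfold I
    congr 1
    funext t
    norm_num
  rw [this, integral_one_div_one_add_sq, Real.arctan_one, Real.arctan_zero]
  ring

lemma key_identity (x : ℝ) : erf x ^ 2 = 1 - 4 / Real.pi * I x := by
  have hd : ∀ y : ℝ, HasDerivAt (fun y => erf y ^ 2 + 4 / Real.pi * I y) 0 y := G_hasDerivAt
  have hconst := is_const_of_deriv_eq_zero (f := fun y => erf y ^ 2 + 4 / Real.pi * I y)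
    (fun y => (hd y).differentiableAt) (fun y => (hd y).deriv) x 0
  simp only [erf_zero, I_zero] at hconst
  have hπ0 : Real.pi ≠ 0 := Real.pi_ne_zero
  have : erf x ^ 2 + 4 / Real.pi * I x = 1 := by
    rw [hconst]; field_simp; norm_num
  linarith

lemma exp_le (x : ℝ) : Real.exp (-(4 / Real.pi) * x ^ 2) ≤ 4 / Real.pi * I x := by
  set c : ℝ := 4 / Real.pi with hc
  have hπ : (0:ℝ) < Real.pi := Real.pi_pos
  have hcpos : 0 < c := by positivity
  have hpt : ∀ t ∈ Icc (0:ℝ) 1,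
      Real.exp (-c * x ^ 2) * ((1 + c * x ^ 2) * (1 / (1 + t ^ 2)) - x ^ 2)
        ≤ Real.exp (-(x ^ 2 * (1 + t ^ 2))) / (1 + t ^ 2) := by
    intro t _
    have ht : (0:ℝ) < 1 + t ^ 2 := by positivity
    have hexp : 1 + (c * x ^ 2 - x ^ 2 * (1 + t ^ 2))
        ≤ Real.exp (c * x ^ 2 - x ^ 2 * (1 + t ^ 2)) := by
      linarith [Real.add_one_le_exp (c * x ^ 2 - x ^ 2 * (1 + t ^ 2))]
    have hsplit : Real.exp (-(x ^ 2 * (1 + t ^ 2)))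
        = Real.exp (-c * x ^ 2) * Real.exp (c * x ^ 2 - x ^ 2 * (1 + t ^ 2)) := by
      rw [← Real.exp_add]; ring_nf
    have h1 : Real.exp (-c * x ^ 2) * (1 + (c * x ^ 2 - x ^ 2 * (1 + t ^ 2)))
        ≤ Real.exp (-(x ^ 2 * (1 + t ^ 2))) := by
      rw [hsplit]
      exact mul_le_mul_of_nonneg_left hexp (Real.exp_pos _).le
    rw [div_eq_mul_inv, ← ge_iff_le]
    calc Real.exp (-(x ^ 2 * (1 + t ^ 2))) * (1 + t ^ 2)⁻¹
        ≥ (Real.exp (-c * x ^ 2) * (1 + (c * x ^ 2 - x ^ 2 * (1 + t ^ 2)))) * (1 + t ^ 2)⁻¹ :=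
          mul_le_mul_of_nonneg_right h1 (by positivity)
      _ = Real.exp (-c * x ^ 2) * ((1 + c * x ^ 2) * (1 / (1 + t ^ 2)) - x ^ 2) := by
          field_simp
          ring
  have hg_cont : Continuous fun t : ℝ =>
      Real.exp (-c * x ^ 2) * ((1 + c * x ^ 2) * (1 / (1 + t ^ 2)) - x ^ 2) := by
    apply continuous_const.mul
    apply Continuous.sub _ continuous_const
    apply continuous_const.mul
    apply Continuous.div continuous_const (by fun_prop)
    intro t; positivity
  have hmono := intervalIntegral.integral_mono_on (μ := volume) zero_le_one
    (hg_cont.intervalIntegrable 0 1) ((cont_F x).intervalIntegrable 0 1) hpt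
  have hlhs : (∫ t in (0:ℝ)..1,
      Real.exp (-c * x ^ 2) * ((1 + c * x ^ 2) * (1 / (1 + t ^ 2)) - x ^ 2))
      = Real.exp (-c * x ^ 2) * ((1 + c * x ^ 2) * (Real.pi / 4) - x ^ 2) := by
    rw [intervalIntegral.integral_const_mul]
    congr 1
    have h1 : Continuous fun t : ℝ => (1 + c * x ^ 2) * (1 / (1 + t ^ 2)) := by
      apply continuous_const.mul
      apply Continuous.div continuous_const (by fun_prop)
      intro t; positivity
    rw [intervalIntegral.integral_sub (h1.intervalIntegrable 0 1)
      (continuous_const.intervalIntegrable 0 1),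
      intervalIntegral.integral_const_mul, integral_one_div_one_add_sq,
      Real.arctan_one, Real.arctan_zero, intervalIntegral.integral_const]
    simp only [smul_eq_mul]
    ring
  rw [hlhs] at hmono
  have : 4 / Real.pi * (Real.exp (-c * x ^ 2) * ((1 + c * x ^ 2) * (Real.pi / 4) - x ^ 2))
      = Real.exp (-c * x ^ 2) := by
    have hπ0 : Real.pi ≠ 0 := Real.pi_ne_zero
    rw [hc]
    field_simp
    ring
  calc Real.exp (-c * x ^ 2)
      = 4 / Real.pi * (Real.exp (-c * x ^ 2) * ((1 + c * x ^ 2) * (Real.pi / 4) - x ^ 2)) :=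
        this.symm
    _ ≤ 4 / Real.pi * I x := by
        apply mul_le_mul_of_nonneg_left _ (by positivity)
        exact hmono

lemma erf_sq_le (x : ℝ) : erf x ^ 2 ≤ 1 - Real.exp (-(4 / Real.pi) * x ^ 2) := by
  rw [key_identity]
  linarith [exp_le x]


/-- If `Σ_k m_k² ≤ C` with `C ≥ 0` and `s_k² ≥ 0`, then
`Σ_k erf(m_k / √(1 + 2 s_k²))² ≤ K (1 − exp(−(4/π) C / K))`. -/
theorem sum_erf_sq_le (K : ℕ) (hK : 0 < K) (m : Fin K → ℝ) (s2 : Fin K → ℝ)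
    (hs2 : ∀ k, 0 ≤ s2 k) (C : ℝ) (hC : 0 ≤ C) (hm : ∑ k, m k ^ 2 ≤ C) :
    ∑ k, erf (m k / Real.sqrt (1 + 2 * s2 k)) ^ 2 ≤
      (K : ℝ) * (1 - Real.exp (-(4 / Real.pi) * C / (K : ℝ))) := by
  have hπ := Real.pi_pos
  set c : ℝ := 4 / Real.pi with hc
  have hcpos : 0 < c := by positivity
  have hKpos : (0:ℝ) < K := by exact_mod_cast hK
  have step1 : ∀ k, erf (m k / Real.sqrt (1 + 2 * s2 k)) ^ 2
      ≤ 1 - Real.exp (-c * m k ^ 2) := by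
    intro k
    have hdone : (1:ℝ) ≤ 1 + 2 * s2 k := by linarith [hs2 k]
    have hdpos : (0:ℝ) < 1 + 2 * s2 k := by linarith
    have hy : (m k / Real.sqrt (1 + 2 * s2 k)) ^ 2 ≤ m k ^ 2 := by
      rw [div_pow, Real.sq_sqrt hdpos.le]
      exact div_le_self (sq_nonneg _) hdone
    refine le_trans (erf_sq_le _) ?_
    have hexp : Real.exp (-c * m k ^ 2)
        ≤ Real.exp (-c * (m k / Real.sqrt (1 + 2 * s2 k)) ^ 2) :=
      Real.exp_le_exp.mpr (by nlinarith)
    linarith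
  have tangent : ∀ k : Fin K, Real.exp (-(c * C / K)) * (1 + (c * C / K - c * m k ^ 2))
      ≤ Real.exp (-c * m k ^ 2) := by
    intro k
    rw [show -c * m k ^ 2 = -(c * C / K) + (c * C / K - c * m k ^ 2) by ring, Real.exp_add]
    exact mul_le_mul_of_nonneg_left
      (by linarith [Real.add_one_le_exp (c * C / K - c * m k ^ 2)]) (Real.exp_pos _).le
  have h1 : ∑ k : Fin K, (1 + (c * C / K - c * m k ^ 2))
      = K * (1 + c * C / K) - c * ∑ k, m k ^ 2 := by
    rw [Finset.sum_add_distrib, Finset.sum_const, Finset.card_univ, Fintype.card_fin,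
      Finset.sum_sub_distrib, Finset.sum_const, Finset.card_univ, Fintype.card_fin,
      ← Finset.mul_sum]
    push_cast
    ring
  have h2 : (K:ℝ) ≤ ∑ k : Fin K, (1 + (c * C / K - c * m k ^ 2)) := by
    rw [h1]
    have hA : c * ∑ k, m k ^ 2 ≤ c * C := mul_le_mul_of_nonneg_left hm hcpos.le
    have hB : (K:ℝ) * (c * C / K) = c * C := by field_simp
    nlinarith
  have hsum : (K:ℝ) * Real.exp (-(c * C / K)) ≤ ∑ k : Fin K, Real.exp (-c * m k ^ 2) := by
    calc (K:ℝ) * Real.exp (-(c * C / K))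
        ≤ Real.exp (-(c * C / K)) * ∑ k : Fin K, (1 + (c * C / K - c * m k ^ 2)) := by
          rw [mul_comm]
          exact mul_le_mul_of_nonneg_left h2 (Real.exp_pos _).le
      _ = ∑ k : Fin K, Real.exp (-(c * C / K)) * (1 + (c * C / K - c * m k ^ 2)) := by
          rw [Finset.mul_sum]
      _ ≤ ∑ k : Fin K, Real.exp (-c * m k ^ 2) :=
          Finset.sum_le_sum fun k _ => tangent k
  have hfinal : ∑ k, erf (m k / Real.sqrt (1 + 2 * s2 k)) ^ 2
      ≤ (K:ℝ) * (1 - Real.exp (-(c * C / K))) := by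
    calc ∑ k, erf (m k / Real.sqrt (1 + 2 * s2 k)) ^ 2
        ≤ ∑ k : Fin K, (1 - Real.exp (-c * m k ^ 2)) :=
          Finset.sum_le_sum fun k _ => step1 k
      _ = (K:ℝ) - ∑ k : Fin K, Real.exp (-c * m k ^ 2) := by
          rw [Finset.sum_sub_distrib, Finset.sum_const, Finset.card_univ, Fintype.card_fin]
          push_cast
          ring
      _ ≤ (K:ℝ) - (K:ℝ) * Real.exp (-(c * C / K)) := by linarith
      _ = (K:ℝ) * (1 - Real.exp (-(c * C / K))) := by ring
  have heq : -(4 / Real.pi) * C / (K:ℝ) = -(c * C / K) := by rw [hc]; ring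
  rw [heq]
  exact hfinal
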